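/- Let n ≥ 1, h > 0, and ħ = h/(2π). Define H : ℂⁿ → ℝ by H(z) = (1/2)‖z‖². Then the set of E ∈ ℝ such that the level set H⁻¹(E) is nonempty, the Fréchet derivative of H is nonzero at every point of H⁻¹(E), and hn/2 − 2πE ∈ hℤ, is exactly {ħ(N + n/2) : N ∈ ℤ, 2N > −n}. -/
import Mathlib


open Real

/-- The Hamiltonian of the `n`-dimensional harmonic oscillator on `ℂⁿ`:
`H(z) = (1/2)‖z‖²`. -/
noncomputable def Hosc (n : ℕ) (z : EuclideanSpace ℂ (Fin n)) : ℝ :=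
  (1 / 2) * ‖z‖ ^ 2

lemma Hosc_hasFDerivAt (n : ℕ) (z : EuclideanSpace ℂ (Fin n)) :
    HasFDerivAt (Hosc n) (innerSL ℝ z) z := by
  have h := (hasFDerivAt_id z).norm_sq.const_mul (1 / 2 : ℝ)
  exact h.congr_fderiv (by ext y; simp [two_smul]; ring)

lemma fderiv_Hosc (n : ℕ) (z : EuclideanSpace ℂ (Fin n)) :
    fderiv ℝ (Hosc n) z = innerSL ℝ z :=
  (Hosc_hasFDerivAt n z).fderiv

/-- The quantized energy levels of the `n`-dimensional harmonic oscillator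
`H(z) = (1/2)‖z‖²` — the nonempty regular values `E` of `H` for which the
corresponding shifted momentum value `hn/2 − 2πE` lies in `hℤ` — are exactly
`E = ħ(N + n/2)` with `N ∈ ℤ`, `2N > −n`, where `ħ = h/(2π)`. -/
theorem quantized_energy_levels_harmonic_oscillator (n : ℕ) (hn : 1 ≤ n)
    (h : ℝ) (hh : 0 < h) (hbar : ℝ) (hbar_def : hbar = h / (2 * π)) :
    {E : ℝ | (Hosc n ⁻¹' {E}).Nonempty ∧
        (∀ z ∈ Hosc n ⁻¹' {E}, fderiv ℝ (Hosc n) z ≠ 0) ∧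
        ∃ m : ℤ, h * n / 2 - 2 * π * E = h * m}
      = {E : ℝ | ∃ N : ℤ, E = hbar * (N + n / 2) ∧ 2 * N > -(n : ℤ)} := by
  have hπ : (0:ℝ) < π := Real.pi_pos
  have h2π : (2 * π : ℝ) ≠ 0 := by positivity
  have hbpos : 0 < hbar := by rw [hbar_def]; positivity
  ext E
  simp only [Set.mem_setOf_eq]
  constructor
  · rintro ⟨⟨z, hz⟩, hreg, m, hm⟩
    have hzE : (1 / 2 : ℝ) * ‖z‖ ^ 2 = E := hz
    have hE0 : 0 ≤ E := by nlinarith [sq_nonneg ‖z‖]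
    have hEpos : 0 < E := by
      rcases hE0.lt_or_eq with h' | h'
      · exact h'
      · exfalso
        have hz0 : z = 0 := by
          have : ‖z‖ = 0 := by nlinarith [norm_nonneg z]
          simpa using this
        have := hreg z hz
        rw [fderiv_Hosc, hz0] at this
        exact this (by ext y; simp)
    refine ⟨-m, ?_, ?_⟩
    · have : E = h / (2 * π) * ((-m : ℤ) + n / 2) := by
        field_simp
        push_cast
        nlinarith [hm]
      rwa [hbar_def]
    · have hpos : (0:ℝ) < (-m : ℤ) + n / 2 := by
        by_contra hc
        push_neg at hc
        have : E = hbar * ((-m : ℤ) + n / 2) := by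
          rw [hbar_def]; field_simp; push_cast; nlinarith [hm]
        nlinarith
      push_cast at hpos
      have : (-(n:ℝ)) < 2 * (-(m:ℝ)) := by linarith
      exact_mod_cast this
  · rintro ⟨N, hE, hN⟩
    have hNpos : (0:ℝ) < (N : ℝ) + n / 2 := by
      have : (-(n:ℤ) : ℝ) < (2 * N : ℤ) := by exact_mod_cast hN
      push_cast at this
      linarith
    have hEpos : 0 < E := by rw [hE]; positivity
    refine ⟨?_, ?_, ⟨-N, ?_⟩⟩
    · refine ⟨EuclideanSpace.single ⟨0, hn⟩ ((Real.sqrt (2 * E) : ℝ) : ℂ), ?_⟩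
      simp only [Set.mem_preimage, Set.mem_singleton_iff, Hosc,
        EuclideanSpace.norm_single]
      rw [Complex.norm_real, Real.norm_eq_abs, sq_abs, Real.sq_sqrt (by linarith)]
      ring
    · intro z hz
      have hzE : (1 / 2 : ℝ) * ‖z‖ ^ 2 = E := hz
      have hzne : z ≠ 0 := by
        intro h0
        rw [h0] at hzE
        simp at hzE
        linarith
      rw [fderiv_Hosc]
      intro hc
      have : (innerSL ℝ z) z = 0 := by rw [hc]; rfl
      rw [innerSL_apply_apply, real_inner_self_eq_norm_sq] at this
      have h2 := (pow_eq_zero_iff (by norm_num : (2:ℕ) ≠ 0)).mp this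
      exact hzne (norm_eq_zero.mp h2)
    · rw [hE, hbar_def]
      push_cast
      field_simp
      ring
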